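/- Let g ∈ GL₂(ℤ) have all entries non-negative. Then there exists a unique finite sequence M₁, …, M_k of matrices, each equal to L or to R, and a unique E ∈ {I, F}, such that g = M₁·M₂·⋯·M_k·E and such that every partial product M_r·M_{r+1}·⋯·M_k·E (for 1 ≤ r ≤ k+1) has all entries non-negative. (Equivalently: there is a unique sequence of row subtractions keeping all entries non-negative which reduces g to the identity I or to F.) -/

import Mathlib

/-- The matrix `F = [[0,1],[1,0]]` as an element of `GL₂(ℤ)`. -/
def Fmat : GL (Fin 2) ℤ := ⟨!![0,1;1,0], !![0,1;1,0], by decide, by decide⟩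

/-- The matrix `L = [[1,0],[1,1]]` as an element of `GL₂(ℤ)`. -/
def Lmat : GL (Fin 2) ℤ := ⟨!![1,0;1,1], !![1,0;-1,1], by decide, by decide⟩

/-- The matrix `R = [[1,1],[0,1]]` as an element of `GL₂(ℤ)`. -/
def Rmat : GL (Fin 2) ℤ := ⟨!![1,1;0,1], !![1,-1;0,1], by decide, by decide⟩

namespace Stmt2Aux

local notation "Mat2" => Matrix (Fin 2) (Fin 2) ℤ

lemma mul_entry (g t : GL (Fin 2) ℤ) (i j : Fin 2) :
    ((g * t : GL (Fin 2) ℤ) : Mat2) i j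
      = (g : Mat2) i 0 * (t : Mat2) 0 j + (g : Mat2) i 1 * (t : Mat2) 1 j := by
  rw [Units.val_mul, Matrix.mul_apply, Fin.sum_univ_two]

lemma coeR : (Rmat : Mat2) = !![1,1;0,1] := rfl
lemma coeL : (Lmat : Mat2) = !![1,0;1,1] := rfl
lemma coeF : (Fmat : Mat2) = !![0,1;1,0] := rfl
lemma coe1 : ((1 : GL (Fin 2) ℤ) : Mat2) = !![1,0;0,1] := by decide

lemma R_entries (g t : GL (Fin 2) ℤ) (h : g = Rmat * t) :
    (g : Mat2) 0 0 = (t : Mat2) 0 0 + (t : Mat2) 1 0 ∧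
    (g : Mat2) 0 1 = (t : Mat2) 0 1 + (t : Mat2) 1 1 ∧
    (g : Mat2) 1 0 = (t : Mat2) 1 0 ∧
    (g : Mat2) 1 1 = (t : Mat2) 1 1 := by
  refine ⟨?_, ?_, ?_, ?_⟩ <;> rw [h, mul_entry, coeR] <;> norm_num

lemma L_entries (g t : GL (Fin 2) ℤ) (h : g = Lmat * t) :
    (g : Mat2) 0 0 = (t : Mat2) 0 0 ∧
    (g : Mat2) 0 1 = (t : Mat2) 0 1 ∧
    (g : Mat2) 1 0 = (t : Mat2) 0 0 + (t : Mat2) 1 0 ∧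
    (g : Mat2) 1 1 = (t : Mat2) 0 1 + (t : Mat2) 1 1 := by
  refine ⟨?_, ?_, ?_, ?_⟩ <;> rw [h, mul_entry, coeL] <;> norm_num

lemma det_pm (g : GL (Fin 2) ℤ) :
    (g : Mat2) 0 0 * (g : Mat2) 1 1 - (g : Mat2) 0 1 * (g : Mat2) 1 0 = 1 ∨
    (g : Mat2) 0 0 * (g : Mat2) 1 1 - (g : Mat2) 0 1 * (g : Mat2) 1 0 = -1 := by
  have h : IsUnit (g : Mat2) := g.isUnit
  rw [Matrix.isUnit_iff_isUnit_det, Int.isUnit_iff] at h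
  rwa [Matrix.det_fin_two] at h

/-- The "goodness" predicate from the statement. -/
def Good (g : GL (Fin 2) ℤ) (p : List (GL (Fin 2) ℤ) × GL (Fin 2) ℤ) : Prop :=
  (∀ m ∈ p.1, m = Lmat ∨ m = Rmat) ∧
  (p.2 = 1 ∨ p.2 = Fmat) ∧
  g = p.1.prod * p.2 ∧
  ∀ r, ∀ i j,
    0 ≤ (((p.1.drop r).prod * p.2 : GL (Fin 2) ℤ) : Mat2) i j

lemma key (n : ℕ) : ∀ g : GL (Fin 2) ℤ, (∀ i j, 0 ≤ (g : Mat2) i j) →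
    ((g : Mat2) 0 0 + (g : Mat2) 0 1 + (g : Mat2) 1 0 + (g : Mat2) 1 1).toNat ≤ n →
    ∃! p : List (GL (Fin 2) ℤ) × GL (Fin 2) ℤ, Good g p := by
  induction n using Nat.strong_induction_on with
  | _ n ih =>
  intro g hpos hn
  set a := (g : Mat2) 0 0 with ha
  set b := (g : Mat2) 0 1 with hb
  set c := (g : Mat2) 1 0 with hc
  set d := (g : Mat2) 1 1 with hd
  have ha0 : 0 ≤ a := hpos 0 0
  have hb0 : 0 ≤ b := hpos 0 1
  have hc0 : 0 ≤ c := hpos 1 0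
  have hd0 : 0 ≤ d := hpos 1 1
  have hdet : a * d - b * c = 1 ∨ a * d - b * c = -1 := det_pm g
  have tail_facts : ∀ (M : GL (Fin 2) ℤ) (l : List (GL (Fin 2) ℤ)) (E : GL (Fin 2) ℤ),
      Good g (M :: l, E) →
      g = M * (l.prod * E) ∧ (∀ i j, 0 ≤ ((l.prod * E : GL (Fin 2) ℤ) : Mat2) i j) ∧
      Good (l.prod * E) (l, E) := by
    intro M l E h
    obtain ⟨hmem, hE, hprod, hdrop⟩ := h
    have h1 : g = M * (l.prod * E) := by
      rw [hprod]; simp [List.prod_cons, mul_assoc]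
    have h2 : ∀ i j, 0 ≤ ((l.prod * E : GL (Fin 2) ℤ) : Mat2) i j := by
      intro i j
      simpa using hdrop 1 i j
    refine ⟨h1, h2, ⟨fun m hm => hmem m (List.mem_cons_of_mem _ hm), hE, rfl, ?_⟩⟩
    intro r i j
    simpa using hdrop (r + 1) i j
  by_cases hC : c ≤ a ∧ d ≤ b
  · by_cases hD : a ≤ c ∧ b ≤ d
    · -- both: rows equal, det zero, contradiction
      exfalso
      have h1 : a = c := le_antisymm hD.1 hC.1
      have h2 : b = d := le_antisymm hD.2 hC.2
      have h0 : a * d - b * c = 0 := by rw [h1, h2]; ring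
      rcases hdet with h | h <;> linarith
    · -- R-step
      have hcd : 0 < c + d := by
        by_contra h
        have hc' : c = 0 := by omega
        have hd' : d = 0 := by omega
        rw [hc', hd'] at hdet
        simp at hdet
      set t : GL (Fin 2) ℤ := Rmat⁻¹ * g with htdef
      have hgt : g = Rmat * t := by rw [htdef, mul_inv_cancel_left]
      obtain ⟨e1, e2, e3, e4⟩ := R_entries g t hgt
      have tpos : ∀ i j, 0 ≤ (t : Mat2) i j := by
        intro i j
        fin_cases i <;> fin_cases j <;>
          simp only [Fin.zero_eta, Fin.mk_one] <;> omega
      have tmeas : ((t : Mat2) 0 0 + (t : Mat2) 0 1 + (t : Mat2) 1 0 + (t : Mat2) 1 1).toNat < n := by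
        have t00 := tpos 0 0
        have t01 := tpos 0 1
        omega
      obtain ⟨q, hq, huq⟩ := ih _ tmeas t tpos le_rfl
      refine ⟨(Rmat :: q.1, q.2), ?_, ?_⟩
      · obtain ⟨hqmem, hqE, hqprod, hqdrop⟩ := hq
        refine ⟨?_, hqE, ?_, ?_⟩
        · intro m hm
          rcases List.mem_cons.mp hm with h | h
          · exact Or.inr h
          · exact hqmem m h
        · show g = (Rmat :: q.1).prod * q.2
          rw [List.prod_cons, mul_assoc, ← hqprod, ← hgt]
        · intro r i j
          cases r with
          | zero =>
            simp only [List.drop_zero, List.prod_cons, mul_assoc, ← hqprod, ← hgt]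
            exact hpos i j
          | succ r =>
            simpa using hqdrop r i j
      · rintro ⟨l, E⟩ hp'
        obtain ⟨hmem, hE, hprod, hdrop⟩ := hp'
        cases l with
        | nil =>
          exfalso
          simp only [List.prod_nil, one_mul] at hprod
          have hE' : E = 1 ∨ E = Fmat := hE
          rcases hE' with h1 | h1 <;> rw [h1] at hprod
          · have hgm : (g : Mat2) = !![1,0;0,1] := by rw [hprod]; decide
            have h11 := congrFun (congrFun hgm 1) 1
            have h01 := congrFun (congrFun hgm 0) 1
            simp at h11 h01
            omega
          · have hgm : (g : Mat2) = !![0,1;1,0] := by rw [hprod, coeF]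
            have h10 := congrFun (congrFun hgm 1) 0
            have h00 := congrFun (congrFun hgm 0) 0
            simp at h10 h00
            omega
        | cons M l' =>
          obtain ⟨hg', htpos', hgood'⟩ := tail_facts M l' E ⟨hmem, hE, hprod, hdrop⟩
          rcases hmem M List.mem_cons_self with hM | hM
          · exfalso
            rw [hM] at hg'
            obtain ⟨f1, f2, f3, f4⟩ := L_entries g _ hg'
            have p1 := htpos' 1 0
            have p2 := htpos' 1 1
            exact hD ⟨by omega, by omega⟩
          · rw [hM] at hg'
            have htt : l'.prod * E = t := by
              rw [htdef, hg', inv_mul_cancel_left]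
            rw [htt] at hgood'
            have hq' := huq (l', E) hgood'
            have hl : l' = q.1 := congrArg Prod.fst hq'
            have hEq : E = q.2 := congrArg Prod.snd hq'
            rw [hM, hl, hEq]
  · by_cases hD : a ≤ c ∧ b ≤ d
    · -- L-step
      have hab : 0 < a + b := by
        by_contra h
        have ha' : a = 0 := by omega
        have hb' : b = 0 := by omega
        rw [ha', hb'] at hdet
        simp at hdet
      set t : GL (Fin 2) ℤ := Lmat⁻¹ * g with htdef
      have hgt : g = Lmat * t := by rw [htdef, mul_inv_cancel_left]
      obtain ⟨e1, e2, e3, e4⟩ := L_entries g t hgt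
      have tpos : ∀ i j, 0 ≤ (t : Mat2) i j := by
        intro i j
        fin_cases i <;> fin_cases j <;>
          simp only [Fin.zero_eta, Fin.mk_one] <;> omega
      have tmeas : ((t : Mat2) 0 0 + (t : Mat2) 0 1 + (t : Mat2) 1 0 + (t : Mat2) 1 1).toNat < n := by
        have t10 := tpos 1 0
        have t11 := tpos 1 1
        omega
      obtain ⟨q, hq, huq⟩ := ih _ tmeas t tpos le_rfl
      refine ⟨(Lmat :: q.1, q.2), ?_, ?_⟩
      · obtain ⟨hqmem, hqE, hqprod, hqdrop⟩ := hq
        refine ⟨?_, hqE, ?_, ?_⟩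
        · intro m hm
          rcases List.mem_cons.mp hm with h | h
          · exact Or.inl h
          · exact hqmem m h
        · show g = (Lmat :: q.1).prod * q.2
          rw [List.prod_cons, mul_assoc, ← hqprod, ← hgt]
        · intro r i j
          cases r with
          | zero =>
            simp only [List.drop_zero, List.prod_cons, mul_assoc, ← hqprod, ← hgt]
            exact hpos i j
          | succ r =>
            simpa using hqdrop r i j
      · rintro ⟨l, E⟩ hp'
        obtain ⟨hmem, hE, hprod, hdrop⟩ := hp'
        cases l with
        | nil =>
          exfalso
          simp only [List.prod_nil, one_mul] at hprod
          have hE' : E = 1 ∨ E = Fmat := hE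
          rcases hE' with h1 | h1 <;> rw [h1] at hprod
          · have hgm : (g : Mat2) = !![1,0;0,1] := by rw [hprod]; decide
            have h00 := congrFun (congrFun hgm 0) 0
            have h10 := congrFun (congrFun hgm 1) 0
            simp at h00 h10
            omega
          · have hgm : (g : Mat2) = !![0,1;1,0] := by rw [hprod, coeF]
            have h01 := congrFun (congrFun hgm 0) 1
            have h11 := congrFun (congrFun hgm 1) 1
            simp at h01 h11
            omega
        | cons M l' =>
          obtain ⟨hg', htpos', hgood'⟩ := tail_facts M l' E ⟨hmem, hE, hprod, hdrop⟩
          rcases hmem M List.mem_cons_self with hM | hM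
          · rw [hM] at hg'
            have htt : l'.prod * E = t := by
              rw [htdef, hg', inv_mul_cancel_left]
            rw [htt] at hgood'
            have hq' := huq (l', E) hgood'
            have hl : l' = q.1 := congrArg Prod.fst hq'
            have hEq : E = q.2 := congrArg Prod.snd hq'
            rw [hM, hl, hEq]
          · exfalso
            rw [hM] at hg'
            obtain ⟨f1, f2, f3, f4⟩ := R_entries g _ hg'
            have p1 := htpos' 0 0
            have p2 := htpos' 0 1
            exact hC ⟨by omega, by omega⟩
    · -- neither: g = 1 or g = Fmat
      have hcase : (a = 1 ∧ b = 0 ∧ c = 0 ∧ d = 1) ∨ (a = 0 ∧ b = 1 ∧ c = 1 ∧ d = 0) := by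
        push_neg at hC hD
        by_cases h1 : c ≤ a
        · have h2 : b < d := hC h1
          have h3 : c < a := by
            rcases lt_or_eq_of_le h1 with h | h
            · exact h
            · exfalso
              have := hD (le_of_eq h.symm)
              omega
          -- g = I
          have key2 : b * c + b + c + 1 ≤ a * d := by
            nlinarith [mul_le_mul (show c + 1 ≤ a by omega) (show b + 1 ≤ d by omega)
              (show (0:ℤ) ≤ b + 1 by omega) (show (0:ℤ) ≤ a by omega)]
          have hdet1 : a * d - b * c = 1 := by
            rcases hdet with h | h
            · exact h
            · exfalso; linarith
          have hb0' : b = 0 := by linarith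
          have hc0' : c = 0 := by linarith
          have had : a * d = 1 := by
            rw [hb0', hc0'] at hdet1; linarith
          have haa : 0 ≤ (a - 1) * (d - 1) := mul_nonneg (by omega) (by omega)
          have ha1 : a = 1 := by nlinarith
          have hd1 : d = 1 := by nlinarith
          exact Or.inl ⟨ha1, hb0', hc0', hd1⟩
        · have h1' : a < c := by omega
          have h2 : d < b := hD h1'.le
          -- g = F
          have key2 : a * d + a + d + 1 ≤ b * c := by
            nlinarith [mul_le_mul (show a + 1 ≤ c by omega) (show d + 1 ≤ b by omega)
              (show (0:ℤ) ≤ d + 1 by omega) (show (0:ℤ) ≤ c by omega)]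
          have hdet1 : a * d - b * c = -1 := by
            rcases hdet with h | h
            · exfalso; linarith
            · exact h
          have ha0' : a = 0 := by linarith
          have hd0' : d = 0 := by linarith
          have hbc : b * c = 1 := by
            rw [ha0', hd0'] at hdet1; linarith
          have hbb : 0 ≤ (b - 1) * (c - 1) := mul_nonneg (by omega) (by omega)
          have hb1 : b = 1 := by nlinarith
          have hc1 : c = 1 := by nlinarith
          exact Or.inr ⟨ha0', hb1, hc1, hd0'⟩
      rcases hcase with ⟨ea, eb, ec, ed⟩ | ⟨ea, eb, ec, ed⟩
      · -- g = 1
        have hg1 : g = 1 := by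
          apply Units.ext
          show (g : Mat2) = _
          rw [Matrix.eta_fin_two (g : Mat2), ← ha, ← hb, ← hc, ← hd, ea, eb, ec, ed, coe1]
        refine ⟨([], 1), ⟨?_, Or.inl rfl, ?_, ?_⟩, ?_⟩
        · simp
        · simp [hg1]
        · intro r i j
          have hx : ((List.drop r ([] : List (GL (Fin 2) ℤ))).prod * (1 : GL (Fin 2) ℤ)) = g := by
            simp [hg1]
          rw [hx]
          exact hpos i j
        · rintro ⟨l, E⟩ hp'
          obtain ⟨hmem, hE, hprod, hdrop⟩ := hp'
          cases l with
          | nil =>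
            simp only [List.prod_nil, one_mul] at hprod
            have hE1 : E = 1 := by rw [← hprod, hg1]
            rw [hE1]
          | cons M l' =>
            exfalso
            obtain ⟨hg', htpos', -⟩ := tail_facts M l' E ⟨hmem, hE, hprod, hdrop⟩
            rcases hmem M List.mem_cons_self with hM | hM <;> rw [hM] at hg'
            · obtain ⟨f1, f2, f3, f4⟩ := L_entries g _ hg'
              have p1 := htpos' 1 0
              omega
            · obtain ⟨f1, f2, f3, f4⟩ := R_entries g _ hg'
              have p1 := htpos' 0 1
              omega
      · -- g = F
        have hgF : g = Fmat := by
          apply Units.ext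
          show (g : Mat2) = _
          rw [Matrix.eta_fin_two (g : Mat2), ← ha, ← hb, ← hc, ← hd, ea, eb, ec, ed, coeF]
        refine ⟨([], Fmat), ⟨?_, Or.inr rfl, ?_, ?_⟩, ?_⟩
        · simp
        · simp [hgF]
        · intro r i j
          have hx : ((List.drop r ([] : List (GL (Fin 2) ℤ))).prod * Fmat) = g := by
            simp [hgF]
          rw [hx]
          exact hpos i j
        · rintro ⟨l, E⟩ hp'
          obtain ⟨hmem, hE, hprod, hdrop⟩ := hp'
          cases l with
          | nil =>
            simp only [List.prod_nil, one_mul] at hprod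
            have hE1 : E = Fmat := by rw [← hprod, hgF]
            rw [hE1]
          | cons M l' =>
            exfalso
            obtain ⟨hg', htpos', -⟩ := tail_facts M l' E ⟨hmem, hE, hprod, hdrop⟩
            rcases hmem M List.mem_cons_self with hM | hM <;> rw [hM] at hg'
            · obtain ⟨f1, f2, f3, f4⟩ := L_entries g _ hg'
              have p1 := htpos' 1 1
              omega
            · obtain ⟨f1, f2, f3, f4⟩ := R_entries g _ hg'
              have p1 := htpos' 0 0
              omega

end Stmt2Aux

theorem stmt_2 (g : GL (Fin 2) ℤ)
    (hpos : ∀ i j, 0 ≤ (g : Matrix (Fin 2) (Fin 2) ℤ) i j) :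
    ∃! p : List (GL (Fin 2) ℤ) × GL (Fin 2) ℤ,
      (∀ m ∈ p.1, m = Lmat ∨ m = Rmat) ∧
      (p.2 = 1 ∨ p.2 = Fmat) ∧
      g = p.1.prod * p.2 ∧
      ∀ r, ∀ i j,
        0 ≤ (((p.1.drop r).prod * p.2 : GL (Fin 2) ℤ) : Matrix (Fin 2) (Fin 2) ℤ) i j := by
  exact Stmt2Aux.key _ g hpos le_rfl
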